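/- Let p be an odd prime and d an integer with p ∤ d such that the Legendre symbol (d/p) equals 1. Then in ℤ[√d][X] one has ∏_{m=1}^{p−1} ∏_{n=1}^{p−1} (x − (m + n√d)) ≡ x^{p−1}·(x^{p−1} − 1)^{p−2} (mod p). -/
import Mathlib

open Polynomial Finset

section aux
variable {p : ℕ} [hp : Fact p.Prime]

lemma aux_prod_univ : ∏ a : ZMod p, (X - C a) = X ^ p - X := by
  have h1 : (1:ℕ) < p := hp.out.one_lt
  have hroots' : (X ^ p - X : (ZMod p)[X]).roots = Finset.univ.val := by
    have := FiniteField.roots_X_pow_card_sub_X (ZMod p)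
    rwa [ZMod.card p] at this
  have hmonic : (X ^ p - X : (ZMod p)[X]).Monic := by
    refine Polynomial.monic_X_pow_sub (p := (X : (ZMod p)[X])) (n := p) ?_
    rw [degree_X]; exact_mod_cast h1
  have hdeg : (X ^ p - X : (ZMod p)[X]).natDegree = p :=
    FiniteField.X_pow_card_sub_X_natDegree_eq _ h1
  have := Polynomial.prod_multiset_X_sub_C_of_monic_of_roots_card_eq hmonic
    (by rw [hroots', hdeg]; simp)
  rw [hroots'] at this
  rw [← this, Finset.prod_eq_multiset_prod]

lemma aux_key (b : ZMod p) (hb : b ≠ 0) :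
    ∏ z ∈ (univ : Finset (ZMod p)).erase 0, ∏ w ∈ (univ : Finset (ZMod p)).erase 0,
      (X - C (z + w * b)) = X ^ (p - 1) * (X ^ (p - 1) - 1) ^ (p - 2) := by
  have h1 : (1:ℕ) < p := hp.out.one_lt
  set W : (ZMod p)[X] := X ^ p - X with hW
  set V : (ZMod p)[X] := ∏ s ∈ (univ : Finset (ZMod p)).erase 0, (X - C s) with hV
  have hXV : X * V = W := by
    have h := Finset.mul_prod_erase univ (fun s => X - C s) (mem_univ (0 : ZMod p))
    simpa [aux_prod_univ] using h
  have hQ : ∀ w : ZMod p,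
      (X - C (w * b)) * ∏ z ∈ (univ : Finset (ZMod p)).erase 0, (X - C (z + w * b)) = W := by
    intro w
    have e : ∏ z : ZMod p, (X - C (z + w * b)) = W := by
      rw [hW, ← aux_prod_univ]
      exact Fintype.prod_equiv (Equiv.addRight (w * b)) _ _ (fun z => rfl)
    have h := Finset.mul_prod_erase univ (fun z => X - C (z + w * b)) (mem_univ (0 : ZMod p))
    rw [e] at h
    simpa using h
  have hbij : ∏ w ∈ (univ : Finset (ZMod p)).erase 0, (X - C (w * b)) = V := by
    apply mul_left_cancel₀ (Polynomial.X_ne_zero (R := ZMod p))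
    rw [hXV]
    have e : ∏ w : ZMod p, (X - C (w * b)) = W := by
      rw [hW, ← aux_prod_univ]
      exact Fintype.prod_equiv (Equiv.mulRight₀ b hb) _ _ (fun z => rfl)
    have h := Finset.mul_prod_erase univ (fun w => X - C (w * b)) (mem_univ (0 : ZMod p))
    rw [e] at h
    simpa using h
  have hcard : ((univ : Finset (ZMod p)).erase 0).card = p - 1 := by
    simp [Finset.card_erase_of_mem, ZMod.card]
  have hDPV : (∏ z ∈ (univ : Finset (ZMod p)).erase 0,
      ∏ w ∈ (univ : Finset (ZMod p)).erase 0, (X - C (z + w * b))) * V = W ^ (p - 1) := by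
    rw [Finset.prod_comm, ← hbij, ← Finset.prod_mul_distrib, ← hcard, ← Finset.prod_const]
    refine Finset.prod_congr rfl fun w _ => ?_
    rw [mul_comm]
    exact hQ w
  have hWne : W ≠ 0 := FiniteField.X_pow_card_sub_X_ne_zero _ h1
  have hVne : V ≠ 0 := by
    intro h
    apply hWne
    rw [← hXV, h, mul_zero]
  have hVval : V = X ^ (p - 1) - 1 := by
    apply mul_left_cancel₀ (Polynomial.X_ne_zero (R := ZMod p))
    rw [hXV, hW, mul_sub, mul_one, ← pow_succ', Nat.sub_add_cancel h1.le]
  apply mul_right_cancel₀ hVne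
  rw [hDPV, ← hXV, mul_pow, ← hVval, mul_assoc, ← pow_succ]
  congr 2
  omega

lemma aux_reindex {M : Type*} [CommMonoid M] (f : ZMod p → M) :
    ∏ m ∈ Finset.Icc (1 : ℤ) ((p : ℤ) - 1), f (m : ZMod p)
      = ∏ z ∈ (univ : Finset (ZMod p)).erase 0, f z := by
  have hp1 : (1:ℕ) < p := hp.out.one_lt
  refine Finset.prod_bij (fun m _ => (m : ZMod p)) ?_ ?_ ?_ ?_
  · intro m hm
    rw [Finset.mem_Icc] at hm
    refine Finset.mem_erase.mpr ⟨?_, Finset.mem_univ _⟩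
    intro h0
    have hdvd : (p : ℤ) ∣ m := (ZMod.intCast_zmod_eq_zero_iff_dvd m p).mp h0
    have := Int.le_of_dvd (by omega) hdvd
    omega
  · intro m₁ hm₁ m₂ hm₂ h
    rw [Finset.mem_Icc] at hm₁ hm₂
    have hmod : m₁ ≡ m₂ [ZMOD (p:ℕ)] := (ZMod.intCast_eq_intCast_iff _ _ _).mp h
    have hdvd : (p : ℤ) ∣ m₂ - m₁ := hmod.dvd
    have := Int.eq_zero_of_abs_lt_dvd hdvd (by rw [abs_lt]; omega)
    omega
  · intro z hz
    rw [Finset.mem_erase] at hz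
    have hvlt : z.val < p := ZMod.val_lt z
    have hvne : z.val ≠ 0 := fun h => hz.1 ((ZMod.val_eq_zero z).mp h)
    refine ⟨(z.val : ℤ), Finset.mem_Icc.mpr ⟨by exact_mod_cast Nat.one_le_iff_ne_zero.mpr hvne,
      by omega⟩, ?_⟩
    push_cast
    simp [ZMod.natCast_val, ZMod.cast_id]
  · intro m hm
    rfl

lemma aux_map (d : ℤ) (b : ZMod p) (hb2 : b * b = ((d : ℤ) : ZMod p)) (hbne : b ≠ 0) :
    (∏ m ∈ Finset.Icc (1 : ℤ) ((p : ℤ) - 1), ∏ n ∈ Finset.Icc (1 : ℤ) ((p : ℤ) - 1),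
        (X - C (⟨m, n⟩ : Zsqrtd d))).map (Zsqrtd.lift ⟨b, hb2⟩)
      = X ^ (p - 1) * (X ^ (p - 1) - 1) ^ (p - 2) := by
  rw [Polynomial.map_prod]
  have step : ∀ m : ℤ, (∏ n ∈ Finset.Icc (1 : ℤ) ((p : ℤ) - 1),
      (X - C (⟨m, n⟩ : Zsqrtd d))).map (Zsqrtd.lift ⟨b, hb2⟩)
      = ∏ w ∈ (univ : Finset (ZMod p)).erase 0, (X - C ((m : ZMod p) + w * b)) := by
    intro m
    rw [Polynomial.map_prod, ← aux_reindex (fun w => (X - C ((m : ZMod p) + w * b)))]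
    refine Finset.prod_congr rfl fun n _ => ?_
    rw [Polynomial.map_sub, Polynomial.map_X, Polynomial.map_C]
    rfl
  calc (∏ m ∈ Finset.Icc (1 : ℤ) ((p : ℤ) - 1), (∏ n ∈ Finset.Icc (1 : ℤ) ((p : ℤ) - 1),
        (X - C (⟨m, n⟩ : Zsqrtd d))).map (Zsqrtd.lift ⟨b, hb2⟩))
      = ∏ m ∈ Finset.Icc (1 : ℤ) ((p : ℤ) - 1), ∏ w ∈ (univ : Finset (ZMod p)).erase 0,
          (X - C ((m : ZMod p) + w * b)) := Finset.prod_congr rfl fun m _ => step m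
    _ = ∏ z ∈ (univ : Finset (ZMod p)).erase 0, ∏ w ∈ (univ : Finset (ZMod p)).erase 0,
          (X - C (z + w * b)) :=
        aux_reindex (fun z => ∏ w ∈ (univ : Finset (ZMod p)).erase 0, (X - C (z + w * b)))
    _ = X ^ (p - 1) * (X ^ (p - 1) - 1) ^ (p - 2) := aux_key b hbne

end aux

theorem stmt_4 (p : ℕ) [Fact p.Prime] (hodd : Odd p) (d : ℤ) (hd : ¬ (p : ℤ) ∣ d)
    (hleg : legendreSym p d = 1) :
    (p : (Zsqrtd d)[X]) ∣
      (∏ m ∈ Finset.Icc (1 : ℤ) ((p : ℤ) - 1), ∏ n ∈ Finset.Icc (1 : ℤ) ((p : ℤ) - 1),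
        (X - C (⟨m, n⟩ : Zsqrtd d)))
      - X ^ (p - 1) * (X ^ (p - 1) - 1) ^ (p - 2) := by
  have hp' : p.Prime := Fact.out
  have hp2 : p ≠ 2 := by rintro rfl; simp [Nat.odd_iff] at hodd
  have hdp : ((d : ZMod p)) ≠ 0 := by
    rw [Ne, ZMod.intCast_zmod_eq_zero_iff_dvd]
    exact hd
  obtain ⟨r, hr⟩ := (legendreSym.eq_one_iff p hdp).mp hleg
  have hr' : r * r = ((d : ℤ) : ZMod p) := hr.symm
  have hrne : r ≠ 0 := by
    intro h
    apply hdp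
    rw [← hr', h, mul_zero]
  have hr'' : (-r) * (-r) = ((d : ℤ) : ZMod p) := by rw [neg_mul_neg]; exact hr'
  set g : (Zsqrtd d)[X] :=
    (∏ m ∈ Finset.Icc (1 : ℤ) ((p : ℤ) - 1), ∏ n ∈ Finset.Icc (1 : ℤ) ((p : ℤ) - 1),
        (X - C (⟨m, n⟩ : Zsqrtd d)))
      - X ^ (p - 1) * (X ^ (p - 1) - 1) ^ (p - 2) with hg
  have hmapQ : ∀ f : Zsqrtd d →+* ZMod p,
      (X ^ (p - 1) * (X ^ (p - 1) - 1) ^ (p - 2) : (Zsqrtd d)[X]).map f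
        = X ^ (p - 1) * (X ^ (p - 1) - 1) ^ (p - 2) := by
    intro f
    simp [Polynomial.map_mul, Polynomial.map_pow, Polynomial.map_sub]
  have h1 : g.map (Zsqrtd.lift ⟨r, hr'⟩) = 0 := by
    rw [hg, Polynomial.map_sub, aux_map d r hr' hrne, hmapQ, sub_self]
  have h2 : g.map (Zsqrtd.lift ⟨-r, hr''⟩) = 0 := by
    rw [hg, Polynomial.map_sub, aux_map d (-r) hr'' (neg_ne_zero.mpr hrne), hmapQ, sub_self]
  rw [show ((p : ℕ) : (Zsqrtd d)[X]) = C ((p : ℕ) : Zsqrtd d) from (Polynomial.C_eq_natCast _).symm]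
  rw [Polynomial.C_dvd_iff_dvd_coeff]
  intro i
  set c : Zsqrtd d := g.coeff i with hc
  have e1 : (c.re : ZMod p) + (c.im : ZMod p) * r = 0 := by
    have := congrArg (fun q => Polynomial.coeff q i) h1
    simpa [Polynomial.coeff_map] using this
  have e2 : (c.re : ZMod p) + (c.im : ZMod p) * (-r) = 0 := by
    have := congrArg (fun q => Polynomial.coeff q i) h2
    simpa [Polynomial.coeff_map] using this
  have h2ne : (2 : ZMod p) ≠ 0 := by
    rw [show (2 : ZMod p) = ((2 : ℕ) : ZMod p) by norm_num, Ne, ZMod.natCast_eq_zero_iff]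
    intro hdvd
    exact hp2 ((Nat.prime_dvd_prime_iff_eq hp' Nat.prime_two).mp hdvd)
  have hre : (c.re : ZMod p) = 0 := by
    have h2c : (2 : ZMod p) * (c.re : ZMod p) = 0 := by linear_combination e1 + e2
    rcases mul_eq_zero.mp h2c with h | h
    · exact absurd h h2ne
    · exact h
  have him : (c.im : ZMod p) = 0 := by
    have : (c.im : ZMod p) * r = 0 := by linear_combination e1 - hre
    rcases mul_eq_zero.mp this with h | h
    · exact h
    · exact absurd h hrne
  obtain ⟨m', hm'⟩ := (ZMod.intCast_zmod_eq_zero_iff_dvd _ p).mp hre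
  obtain ⟨n', hn'⟩ := (ZMod.intCast_zmod_eq_zero_iff_dvd _ p).mp him
  refine ⟨⟨m', n'⟩, ?_⟩
  ext
  · simp [Zsqrtd.re_mul, hm']
  · simp [Zsqrtd.im_mul, hn']
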